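/- Let ν be a log-concave probability measure on ℝ and p ≥ 1. Then there exists a constant C_p depending only on p such that (∫ |t|^p dν)^{1/p} ≤ C_p ∫ |t| dν. -/

import Mathlib

open MeasureTheory Real Set

open scoped ENNReal

lemma kk_measurable {g : ℝ → ℝ≥0∞} (htop : ∀ t, g t ≠ ⊤)
    (hlc : ∀ x y a b : ℝ, 0 ≤ a → 0 ≤ b → a + b = 1 → g x ^ a * g y ^ b ≤ g (a * x + b * y)) :
    Measurable g := by
  apply measurable_of_Ioi
  intro c
  have h : OrdConnected (g ⁻¹' Ioi c) := by
    constructor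
    intro x hx y hy z hz
    simp only [mem_preimage, mem_Ioi] at hx hy ⊢
    rcases eq_or_lt_of_le hz.1 with rfl | hxz
    · exact hx
    rcases eq_or_lt_of_le hz.2 with rfl | hzy
    · exact hy
    have hxy : x < y := hxz.trans hzy
    have hd : (0:ℝ) < y - x := by linarith
    have ha : 0 ≤ (y - z) / (y - x) := by
      apply div_nonneg <;> linarith
    have hb : 0 ≤ (z - x) / (y - x) := by
      apply div_nonneg <;> linarith
    have hab : (y - z) / (y - x) + (z - x) / (y - x) = 1 := by
      field_simp; ring
    have harg : (y - z) / (y - x) * x + (z - x) / (y - x) * y = z := by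
      field_simp; ring
    have hmin : c < min (g x) (g y) := lt_min hx hy
    have hmin0 : min (g x) (g y) ≠ 0 := by
      intro h0
      rw [h0] at hmin
      exact (not_lt_of_ge (zero_le (a := c))) hmin
    have hmintop : min (g x) (g y) ≠ ⊤ := by
      rcases min_choice (g x) (g y) with h | h <;> rw [h] <;> [exact htop x; exact htop y]
    calc c < min (g x) (g y) := hmin
      _ = min (g x) (g y) ^ ((y - z) / (y - x)) * min (g x) (g y) ^ ((z - x) / (y - x)) := by
          rw [← ENNReal.rpow_add _ _ hmin0 hmintop, hab, ENNReal.rpow_one]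
      _ ≤ g x ^ ((y - z) / (y - x)) * g y ^ ((z - x) / (y - x)) := by
          gcongr <;> [exact min_le_left _ _; exact min_le_right _ _]
      _ ≤ g _ := hlc x y _ _ ha hb hab
      _ = g z := by rw [harg]
  exact h.measurableSet

lemma kk_toReal_lc {g : ℝ → ℝ≥0∞} (htop : ∀ t, g t ≠ ⊤)
    (hlc : ∀ x y a b : ℝ, 0 ≤ a → 0 ≤ b → a + b = 1 → g x ^ a * g y ^ b ≤ g (a * x + b * y))
    (x y a b : ℝ) (ha : 0 ≤ a) (hb : 0 ≤ b) (hab : a + b = 1) :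
    (g x).toReal ^ a * (g y).toReal ^ b ≤ (g (a * x + b * y)).toReal := by
  have h := hlc x y a b ha hb hab
  have h2 := ENNReal.toReal_mono (htop _) h
  rwa [ENNReal.toReal_mul, ← ENNReal.toReal_rpow, ← ENNReal.toReal_rpow] at h2

lemma kk_decay {f : ℝ → ℝ} (hf0 : ∀ x, 0 ≤ f x)
    (hlc : ∀ x y a b : ℝ, 0 ≤ a → 0 ≤ b → a + b = 1 → f x ^ a * f y ^ b ≤ f (a * x + b * y))
    {x₁ x₀ A B : ℝ} (hx : x₁ < x₀) (hA : 0 < A) (hA1 : A ≤ f x₁) (hB : f x₀ ≤ B)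
    (hBA : 2 * B ≤ A) :
    ∀ x, x₀ ≤ x → f x ≤ B * Real.exp (-(Real.log 2 * ((x - x₀) / (x₀ - x₁)))) := by
  intro x hx'
  have hB0 : 0 ≤ B := le_trans (hf0 x₀) hB
  rcases eq_or_lt_of_le hx' with rfl | hlt
  · simpa using hB
  rcases eq_or_lt_of_le (hf0 x) with hfx | hfx
  · calc f x = 0 := hfx.symm
      _ ≤ _ := by positivity
  have hfx₁pos : 0 < f x₁ := lt_of_lt_of_le hA hA1
  have hxx₁ : (0:ℝ) < x - x₁ := by linarith
  have hd : (0:ℝ) < x₀ - x₁ := by linarith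
  set lam := (x - x₀) / (x - x₁) with hlam_def
  set bb := (x₀ - x₁) / (x - x₁) with hbb_def
  have hlam0 : 0 < lam := by rw [hlam_def]; apply div_pos <;> linarith
  have hbb0 : 0 < bb := by rw [hbb_def]; apply div_pos <;> linarith
  have hab : lam + bb = 1 := by rw [hlam_def, hbb_def]; field_simp; ring
  have harg : lam * x₁ + bb * x = x₀ := by rw [hlam_def, hbb_def]; field_simp; ring
  have key := hlc x₁ x lam bb hlam0.le hbb0.le hab
  rw [harg] at key
  have hfx₀pos : 0 < f x₀ :=
    lt_of_lt_of_le (mul_pos (Real.rpow_pos_of_pos hfx₁pos _) (Real.rpow_pos_of_pos hfx _)) key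
  have hBpos : 0 < B := lt_of_lt_of_le hfx₀pos hB
  have hlog : lam * Real.log (f x₁) + bb * Real.log (f x) ≤ Real.log (f x₀) := by
    have h := Real.log_le_log
      (mul_pos (Real.rpow_pos_of_pos hfx₁pos _) (Real.rpow_pos_of_pos hfx _)) key
    rwa [Real.log_mul (ne_of_gt (Real.rpow_pos_of_pos hfx₁pos _))
      (ne_of_gt (Real.rpow_pos_of_pos hfx _)), Real.log_rpow hfx₁pos, Real.log_rpow hfx] at h
  have h1 : Real.log (f x₀) ≤ Real.log B := Real.log_le_log hfx₀pos hB
  have h3 : Real.log (2 * B) ≤ Real.log A := Real.log_le_log (by linarith) hBA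
  have h2 : Real.log (2 * B) = Real.log 2 + Real.log B :=
    Real.log_mul two_ne_zero (ne_of_gt hBpos)
  have h4 : Real.log A ≤ Real.log (f x₁) := Real.log_le_log hA hA1
  have h5 : lam * (Real.log 2 + Real.log B) ≤ lam * Real.log (f x₁) :=
    mul_le_mul_of_nonneg_left (by linarith) hlam0.le
  have hkey2 : bb * ((x - x₀) / (x₀ - x₁)) = lam := by
    rw [hlam_def, hbb_def]; field_simp
  have hbig : bb * Real.log (f x) ≤ bb * (Real.log B - Real.log 2 * ((x - x₀) / (x₀ - x₁))) := by
    have expand : bb * (Real.log B - Real.log 2 * ((x - x₀) / (x₀ - x₁)))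
        = bb * Real.log B - lam * Real.log 2 := by
      rw [mul_sub, mul_left_comm, hkey2]; ring
    have h6 : bb * Real.log B = Real.log B - lam * Real.log B := by
      rw [show bb = 1 - lam by linarith]; ring
    rw [expand]
    nlinarith [hlog, h1, h5, h6]
  have hfinal : Real.log (f x) ≤ Real.log B - Real.log 2 * ((x - x₀) / (x₀ - x₁)) :=
    (mul_le_mul_iff_right₀ hbb0).mp hbig
  calc f x = Real.exp (Real.log (f x)) := (Real.exp_log hfx).symm
    _ ≤ Real.exp (Real.log B - Real.log 2 * ((x - x₀) / (x₀ - x₁))) := Real.exp_le_exp.mpr hfinal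
    _ = B * Real.exp (-(Real.log 2 * ((x - x₀) / (x₀ - x₁)))) := by
      rw [sub_eq_add_neg, Real.exp_add, Real.exp_log hBpos]

lemma kk_int_rpow_exp {p c : ℝ} (hp : 1 ≤ p) (hc : 0 < c) :
    ∫ s in Ioi (0:ℝ), s ^ p * Real.exp (-(c * s)) = (1/c) ^ (p+1) * Real.Gamma (p+1) := by
  have h := integral_rpow_mul_exp_neg_mul_rpow (p := 1) (q := p) (b := c) one_pos
    (by linarith) hc
  simp only [Real.rpow_one, div_one, one_div, neg_mul] at h ⊢
  rw [h, Real.rpow_neg hc.le, ← Real.inv_rpow hc.le, mul_one]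

lemma kk_int_exp {c : ℝ} (hc : 0 < c) :
    ∫ s in Ioi (0:ℝ), Real.exp (-(c * s)) = 1/c := by
  have h := integral_exp_neg_mul_rpow (p := 1) (b := c) one_pos hc
  simp only [Real.rpow_one, neg_mul] at h ⊢
  rw [h]
  norm_num [Real.Gamma_two, Real.rpow_neg_one]

lemma kk_integrable_rpow_exp {p c : ℝ} (hp : 1 ≤ p) (hc : 0 < c) :
    IntegrableOn (fun s : ℝ => s ^ p * Real.exp (-(c * s))) (Ioi 0) := by
  have h := integrableOn_rpow_mul_exp_neg_mul_rpow (p := 1) (s := p) (b := c)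
    (by linarith) one_pos hc
  simpa only [Real.rpow_one, neg_mul] using h

lemma kk_integrable_exp {c : ℝ} (hc : 0 < c) :
    IntegrableOn (fun s : ℝ => Real.exp (-(c * s))) (Ioi 0) := by
  simpa only [neg_mul] using exp_neg_integrableOn_Ioi 0 hc

lemma kk_tail_lintegral {p c x₀ B : ℝ} (hp : 1 ≤ p) (hc : 0 < c) (hx₀ : 0 ≤ x₀) (hB : 0 ≤ B) :
    ∫⁻ t in Ioi x₀, ENNReal.ofReal (B * (Real.exp (-(c * (t - x₀))) * t ^ p)) ≤
      ENNReal.ofReal (B * (2 ^ p * (x₀ ^ p * (1/c) + (1/c) ^ (p+1) * Real.Gamma (p+1)))) := by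
  have hmp : MeasurePreserving (fun s : ℝ => s + x₀) volume volume :=
    measurePreserving_add_right volume x₀
  have hemb : MeasurableEmbedding (fun s : ℝ => s + x₀) := measurableEmbedding_addRight x₀
  have hpre : (fun s : ℝ => s + x₀) ⁻¹' (Ioi x₀) = Ioi 0 := by
    ext s; simp
  have hsub := hmp.setLIntegral_comp_preimage_emb hemb
    (fun t => ENNReal.ofReal (B * (Real.exp (-(c * (t - x₀))) * t ^ p))) (Ioi x₀)
  rw [hpre] at hsub
  rw [← hsub]
  simp only [add_sub_cancel_right]
  set G : ℝ → ℝ := fun s => B * 2 ^ p * (s ^ p * Real.exp (-(c * s)))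
    + B * 2 ^ p * x₀ ^ p * Real.exp (-(c * s)) with hG_def
  have hGint : IntegrableOn G (Ioi (0:ℝ)) :=
    ((kk_integrable_rpow_exp hp hc).const_mul _).add ((kk_integrable_exp hc).const_mul _)
  have step1 : ∫⁻ s in Ioi (0:ℝ),
      ENNReal.ofReal (B * (Real.exp (-(c * s)) * (s + x₀) ^ p)) ∂volume
      ≤ ∫⁻ s in Ioi (0:ℝ), ENNReal.ofReal (G s) ∂volume := by
    apply setLIntegral_mono' measurableSet_Ioi
    intro s hs
    simp only [mem_Ioi] at hs
    apply ENNReal.ofReal_le_ofReal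
    have hmax : s + x₀ ≤ 2 * max s x₀ := by
      rcases le_total s x₀ with h | h
      · rw [max_eq_right h]; linarith
      · rw [max_eq_left h]; linarith
    have hmaxnn : (0:ℝ) ≤ max s x₀ := le_trans hs.le (le_max_left _ _)
    have h1 : (s + x₀) ^ p ≤ 2 ^ p * max s x₀ ^ p := by
      rw [← Real.mul_rpow (by norm_num) hmaxnn]
      exact Real.rpow_le_rpow (by linarith) hmax (by linarith)
    have h2 : max s x₀ ^ p ≤ s ^ p + x₀ ^ p := by
      rcases max_cases s x₀ with ⟨h, _⟩ | ⟨h, _⟩ <;> rw [h]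
      · have : 0 ≤ x₀ ^ p := Real.rpow_nonneg hx₀ p
        linarith
      · have : 0 ≤ s ^ p := Real.rpow_nonneg hs.le p
        linarith
    have hexp : 0 < Real.exp (-(c * s)) := Real.exp_pos _
    rw [hG_def]
    calc B * (Real.exp (-(c * s)) * (s + x₀) ^ p)
        ≤ B * (Real.exp (-(c * s)) * (2 ^ p * (s ^ p + x₀ ^ p))) := by
          apply mul_le_mul_of_nonneg_left _ hB
          apply mul_le_mul_of_nonneg_left _ hexp.le
          calc (s + x₀) ^ p ≤ 2 ^ p * max s x₀ ^ p := h1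
            _ ≤ 2 ^ p * (s ^ p + x₀ ^ p) := by
              apply mul_le_mul_of_nonneg_left h2 (Real.rpow_nonneg (by norm_num) p)
      _ = B * 2 ^ p * (s ^ p * Real.exp (-(c * s))) + B * 2 ^ p * x₀ ^ p * Real.exp (-(c * s)) := by
          ring
  refine le_trans step1 ?_
  have hGnn : 0 ≤ᵐ[volume.restrict (Ioi (0:ℝ))] G := by
    filter_upwards [ae_restrict_mem measurableSet_Ioi] with s hs
    have hs0 : (0:ℝ) < s := hs
    have : 0 ≤ s ^ p := Real.rpow_nonneg hs0.le p
    have : 0 ≤ x₀ ^ p := Real.rpow_nonneg hx₀ p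
    have h2p : (0:ℝ) ≤ 2 ^ p := Real.rpow_nonneg (by norm_num) p
    rw [hG_def]
    positivity
  rw [← ofReal_integral_eq_lintegral_ofReal hGint hGnn]
  apply ENNReal.ofReal_le_ofReal
  rw [hG_def]
  rw [integral_add ((kk_integrable_rpow_exp hp hc).const_mul _)
    ((kk_integrable_exp hc).const_mul _), MeasureTheory.integral_const_mul, MeasureTheory.integral_const_mul,
    kk_int_rpow_exp hp hc, kk_int_exp hc]
  ring_nf
  apply le_of_eq
  ring

lemma kk_markov {ν : Measure ℝ} {m : ℝ}
    (hm : ∫⁻ t, ENNReal.ofReal |t| ∂ν = ENNReal.ofReal m) {a : ℝ} (ha : 0 < a) :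
    ν {t : ℝ | a ≤ |t|} ≤ ENNReal.ofReal (m / a) := by
  have hmeas : AEMeasurable (fun t : ℝ => ENNReal.ofReal |t|) ν :=
    (measurable_abs.ennreal_ofReal).aemeasurable
  have h := mul_meas_ge_le_lintegral₀ hmeas (ENNReal.ofReal a)
  rw [hm] at h
  have hset : {x : ℝ | ENNReal.ofReal a ≤ ENNReal.ofReal |x|} = {t : ℝ | a ≤ |t|} := by
    ext x; simp [ENNReal.ofReal_le_ofReal_iff (abs_nonneg x)]
  rw [hset] at h
  rw [ENNReal.ofReal_div_of_pos ha]
  exact (ENNReal.le_div_iff_mul_le (Or.inl (ENNReal.ofReal_pos.mpr ha).ne')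
    (Or.inl ENNReal.ofReal_ne_top)).mpr (by rwa [mul_comm])

lemma kk_exists_big {g : ℝ → ℝ≥0∞} {m : ℝ} (hm0 : 0 < m)
    (hprob : IsProbabilityMeasure (volume.withDensity g))
    (hm : ∫⁻ t, ENNReal.ofReal |t| ∂(volume.withDensity g) = ENNReal.ofReal m) :
    ∃ x₁ ∈ Icc (-(7*m)) (7*m), ENNReal.ofReal (1/(17*m)) ≤ g x₁ := by
  by_contra hcon
  push_neg at hcon
  set ν := volume.withDensity g with hν
  have hIcc : ν (Icc (-(7*m)) (7*m)) ≤ ENNReal.ofReal (14/17) := by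
    rw [hν, withDensity_apply _ measurableSet_Icc]
    calc ∫⁻ x in Icc (-(7*m)) (7*m), g x
        ≤ ∫⁻ _ in Icc (-(7*m)) (7*m), ENNReal.ofReal (1/(17*m)) :=
          setLIntegral_mono' measurableSet_Icc (fun x hx => (hcon x hx).le)
      _ = ENNReal.ofReal (1/(17*m)) * volume (Icc (-(7*m)) (7*m)) := setLIntegral_const _ _
      _ = ENNReal.ofReal (1/(17*m)) * ENNReal.ofReal (14*m) := by
          rw [Real.volume_Icc]; congr 1; ring
      _ = ENNReal.ofReal (14/17) := by
          rw [← ENNReal.ofReal_mul (by positivity)]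
          congr 1; field_simp
  have hcompl : ν (Icc (-(7*m)) (7*m))ᶜ ≤ ENNReal.ofReal (1/7) := by
    calc ν (Icc (-(7*m)) (7*m))ᶜ ≤ ν {t : ℝ | 7*m ≤ |t|} := by
          apply measure_mono
          intro t ht
          simp only [mem_compl_iff, mem_Icc, not_and_or, not_le] at ht
          simp only [mem_setOf_eq]
          rcases abs_cases t with ⟨h1, _⟩ | ⟨h1, _⟩ <;> rw [h1] <;> rcases ht with h | h <;> linarith
      _ ≤ ENNReal.ofReal (m/(7*m)) := kk_markov hm (by positivity)
      _ = ENNReal.ofReal (1/7) := by congr 1; field_simp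
  have h1 : (1 : ℝ≥0∞) ≤ ENNReal.ofReal (14/17) + ENNReal.ofReal (1/7) := by
    calc (1 : ℝ≥0∞) = ν univ := measure_univ.symm
      _ = ν (Icc (-(7*m)) (7*m) ∪ (Icc (-(7*m)) (7*m))ᶜ) := by rw [union_compl_self]
      _ ≤ ν (Icc (-(7*m)) (7*m)) + ν (Icc (-(7*m)) (7*m))ᶜ := measure_union_le _ _
      _ ≤ _ := add_le_add hIcc hcompl
  rw [← ENNReal.ofReal_add (by norm_num) (by norm_num)] at h1
  have : (1:ℝ≥0∞) < 1 := lt_of_le_of_lt h1 (ENNReal.ofReal_lt_one.mpr (by norm_num))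
  exact lt_irrefl _ this

-- existence of a point in [8m,15m] where g is small

lemma kk_exists_small {g : ℝ → ℝ≥0∞} {m : ℝ} (hm0 : 0 < m) {u v : ℝ}
    (hu : 8*m ≤ u) (huv : u + 7*m ≤ v)
    (hm : ∫⁻ t, ENNReal.ofReal |t| ∂(volume.withDensity g) = ENNReal.ofReal m) :
    ∃ x₀ ∈ Icc u v, g x₀ ≤ ENNReal.ofReal (1/(49*m)) := by
  by_contra hcon
  push_neg at hcon
  set ν := volume.withDensity g with hν
  have hlow : ENNReal.ofReal (1/7) ≤ ν (Icc u v) := by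
    rw [hν, withDensity_apply _ measurableSet_Icc]
    calc ENNReal.ofReal (1/7)
        = ENNReal.ofReal (1/(49*m)) * ENNReal.ofReal (7*m) := by
          rw [← ENNReal.ofReal_mul (by positivity)]; congr 1; field_simp; ring
      _ ≤ ENNReal.ofReal (1/(49*m)) * volume (Icc u v) := by
          apply mul_le_mul_right
          rw [Real.volume_Icc]
          exact ENNReal.ofReal_le_ofReal (by linarith)
      _ = ∫⁻ _ in Icc u v, ENNReal.ofReal (1/(49*m)) := (setLIntegral_const _ _).symm
      _ ≤ ∫⁻ x in Icc u v, g x :=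
          setLIntegral_mono' measurableSet_Icc (fun x hx => (hcon x hx).le)
  have hupp : ν (Icc u v) ≤ ENNReal.ofReal (1/8) := by
    calc ν (Icc u v) ≤ ν {t : ℝ | 8*m ≤ |t|} := by
          apply measure_mono
          intro t ht
          simp only [mem_Icc] at ht
          simp only [mem_setOf_eq]
          rcases abs_cases t with ⟨h1, _⟩ | ⟨h1, h2⟩ <;> rw [h1] <;> linarith [ht.1]
      _ ≤ ENNReal.ofReal (m/(8*m)) := kk_markov hm (by positivity)
      _ = ENNReal.ofReal (1/8) := by congr 1; field_simp
  have : ENNReal.ofReal (1/7) ≤ ENNReal.ofReal (1/8) := le_trans hlow hupp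
  rw [ENNReal.ofReal_le_ofReal_iff (by norm_num)] at this
  norm_num at this

lemma kk_withDensity_neg {g : ℝ → ℝ≥0∞} :
    volume.withDensity (fun t => g (-t)) = Measure.map Neg.neg (volume.withDensity g) := by
  ext s hs
  rw [Measure.map_apply measurable_neg hs, withDensity_apply _ hs,
    withDensity_apply _ (measurable_neg hs)]
  have h := (Measure.measurePreserving_neg (volume : Measure ℝ)).setLIntegral_comp_preimage_emb
    measurableEmbedding_neg g (Neg.neg ⁻¹' s)
  have hpre : Neg.neg ⁻¹' (Neg.neg ⁻¹' s) = s := by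
    ext x; simp
  rw [hpre] at h
  exact h

lemma kk_oneside (p : ℝ) (hp : 1 ≤ p) {g : ℝ → ℝ≥0∞} (htop : ∀ t, g t ≠ ⊤)
    (hlc : ∀ x y a b : ℝ, 0 ≤ a → 0 ≤ b → a + b = 1 → g x ^ a * g y ^ b ≤ g (a * x + b * y))
    {m : ℝ} (hm0 : 0 < m)
    (hprob : IsProbabilityMeasure (volume.withDensity g))
    (hm : ∫⁻ t, ENNReal.ofReal |t| ∂(volume.withDensity g) = ENNReal.ofReal m) :
    ∫⁻ t in Ioi (15*m), ENNReal.ofReal (|t| ^ p) ∂(volume.withDensity g) ≤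
      ENNReal.ofReal ((2 ^ p * (15 ^ p * 32 + 32 ^ (p+1) * Real.Gamma (p+1))) * m ^ p) := by
  have hmeas : Measurable g := kk_measurable htop hlc
  obtain ⟨x₁, hx₁mem, hx₁g⟩ := kk_exists_big hm0 hprob hm
  obtain ⟨x₀, hx₀mem, hx₀g⟩ := kk_exists_small (u := 8*m) (v := 15*m) hm0 le_rfl (by linarith) hm
  simp only [mem_Icc] at hx₁mem hx₀mem
  have hx₁x₀ : x₁ < x₀ := by nlinarith [hx₁mem.2, hx₀mem.1]
  set f : ℝ → ℝ := fun t => (g t).toReal with hf_def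
  have hf0 : ∀ x, 0 ≤ f x := fun x => ENNReal.toReal_nonneg
  have hA1 : 1/(17*m) ≤ f x₁ := by
    rw [hf_def]
    exact (ENNReal.ofReal_le_iff_le_toReal (htop x₁)).mp hx₁g
  have hB1 : f x₀ ≤ 1/(49*m) := ENNReal.toReal_le_of_le_ofReal (by positivity) hx₀g
  have hdecay := kk_decay hf0 (kk_toReal_lc htop hlc) hx₁x₀ (by positivity : (0:ℝ) < 1/(17*m))
    hA1 hB1 (by rw [show (2:ℝ)*(1/(49*m)) = 2/(49*m) by ring,
      div_le_div_iff₀ (by positivity) (by positivity)]; nlinarith)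
  -- exponential bound with c = 1/(32m)
  set c : ℝ := 1/(32*m) with hc_def
  have hc : 0 < c := by rw [hc_def]; positivity
  have hgbound : ∀ t, x₀ ≤ t → g t ≤ ENNReal.ofReal ((1/(49*m)) * Real.exp (-(c * (t - x₀)))) := by
    intro t ht
    have hd := hdecay t ht
    have hexp : Real.exp (-(Real.log 2 * ((t - x₀) / (x₀ - x₁))))
        ≤ Real.exp (-(c * (t - x₀))) := by
      apply Real.exp_le_exp.mpr
      apply neg_le_neg
      have h22 : x₀ - x₁ ≤ 22*m := by linarith [hx₀mem.2, hx₁mem.1]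
      have hd0 : 0 < x₀ - x₁ := by linarith
      have ht0 : 0 ≤ t - x₀ := by linarith
      have hlog2 : (0.6931471803 : ℝ) < Real.log 2 := Real.log_two_gt_d9
      have step1 : (t - x₀) / (22*m) ≤ (t - x₀) / (x₀ - x₁) :=
        div_le_div_of_nonneg_left ht0 hd0 h22
      calc c * (t - x₀) = (11/16) * ((t - x₀) / (22*m)) := by rw [hc_def]; field_simp; ring
        _ ≤ Real.log 2 * ((t - x₀) / (22*m)) :=
            mul_le_mul_of_nonneg_right (by linarith) (by positivity)
        _ ≤ Real.log 2 * ((t - x₀) / (x₀ - x₁)) := by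
            apply mul_le_mul_of_nonneg_left step1 (by positivity)
    calc g t = ENNReal.ofReal (f t) := (ENNReal.ofReal_toReal (htop t)).symm
      _ ≤ ENNReal.ofReal ((1/(49*m)) * Real.exp (-(c * (t - x₀)))) := by
          apply ENNReal.ofReal_le_ofReal
          exact le_trans hd (mul_le_mul_of_nonneg_left hexp (by positivity))
  have hx₀pos : 0 < x₀ := lt_of_lt_of_le (by positivity) hx₀mem.1
  have hF : Measurable fun t : ℝ => ENNReal.ofReal (|t| ^ p) :=
    ((Real.continuous_rpow_const (by linarith : (0:ℝ) ≤ p)).comp continuous_abs)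
      |>.measurable.ennreal_ofReal
  have hga : 0 < Real.Gamma (p+1) := Real.Gamma_pos_of_pos (by linarith)
  have hc1 : 1/c = 32*m := by rw [hc_def, one_div_one_div]
  have h2p : (0:ℝ) ≤ 2 ^ p := Real.rpow_nonneg (by norm_num) p
  have h15p : (0:ℝ) ≤ 15 ^ p := Real.rpow_nonneg (by norm_num) p
  have h32p : (0:ℝ) ≤ 32 ^ (p+1) := Real.rpow_nonneg (by norm_num) _
  have hmp : (0:ℝ) ≤ m ^ p := Real.rpow_nonneg hm0.le p
  calc ∫⁻ t in Ioi (15*m), ENNReal.ofReal (|t| ^ p) ∂(volume.withDensity g)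
      ≤ ∫⁻ t in Ioi x₀, ENNReal.ofReal (|t| ^ p) ∂(volume.withDensity g) :=
        lintegral_mono_set (Ioi_subset_Ioi hx₀mem.2)
    _ = ∫⁻ t in Ioi x₀, (g * fun t => ENNReal.ofReal (|t| ^ p)) t ∂volume :=
        setLIntegral_withDensity_eq_setLIntegral_mul volume hmeas hF measurableSet_Ioi
    _ ≤ ∫⁻ t in Ioi x₀,
          ENNReal.ofReal ((1/(49*m)) * (Real.exp (-(c * (t - x₀))) * t ^ p)) ∂volume := by
        apply setLIntegral_mono' measurableSet_Ioi
        intro t ht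
        have htpos : 0 < t := lt_trans hx₀pos ht
        calc (g * fun t => ENNReal.ofReal (|t| ^ p)) t = g t * ENNReal.ofReal (t ^ p) := by
              simp [Pi.mul_apply, abs_of_pos htpos]
          _ ≤ ENNReal.ofReal ((1/(49*m)) * Real.exp (-(c * (t - x₀)))) * ENNReal.ofReal (t ^ p) :=
              mul_le_mul_left (hgbound t (le_of_lt ht)) _
          _ = ENNReal.ofReal ((1/(49*m)) * (Real.exp (-(c * (t - x₀))) * t ^ p)) := by
              rw [← ENNReal.ofReal_mul (by positivity), mul_assoc]
    _ ≤ ENNReal.ofReal ((1/(49*m)) *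
          (2 ^ p * (x₀ ^ p * (1/c) + (1/c) ^ (p+1) * Real.Gamma (p+1)))) :=
        kk_tail_lintegral hp hc hx₀pos.le (by positivity)
    _ ≤ ENNReal.ofReal ((2 ^ p * (15 ^ p * 32 + 32 ^ (p+1) * Real.Gamma (p+1))) * m ^ p) := by
        apply ENNReal.ofReal_le_ofReal
        rw [hc1]
        have hx₀p : x₀ ^ p ≤ 15 ^ p * m ^ p := by
          rw [← Real.mul_rpow (by norm_num) hm0.le]
          exact Real.rpow_le_rpow hx₀pos.le hx₀mem.2 (by linarith)
        have h32 : (32*m) ^ (p+1) = 32 ^ (p+1) * (m ^ p * m) := by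
          rw [Real.mul_rpow (by norm_num) hm0.le, Real.rpow_add hm0, Real.rpow_one]
        calc (1/(49*m)) * (2 ^ p * (x₀ ^ p * (32*m) + (32*m) ^ (p+1) * Real.Gamma (p+1)))
            ≤ (1/(49*m)) * (2 ^ p * ((15 ^ p * m ^ p) * (32*m)
                + (32*m) ^ (p+1) * Real.Gamma (p+1))) := by
              apply mul_le_mul_of_nonneg_left _ (by positivity)
              apply mul_le_mul_of_nonneg_left _ h2p
              exact add_le_add_left (mul_le_mul_of_nonneg_right hx₀p (by positivity)) _
          _ = ((2 ^ p * (15 ^ p * 32 + 32 ^ (p+1) * Real.Gamma (p+1))) * m ^ p) * (1/49) := by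
              rw [h32]; field_simp
          _ ≤ (2 ^ p * (15 ^ p * 32 + 32 ^ (p+1) * Real.Gamma (p+1))) * m ^ p := by
              have hXnn : (0:ℝ) ≤ (2 ^ p * (15 ^ p * 32 + 32 ^ (p+1) * Real.Gamma (p+1))) * m ^ p := by
                apply mul_nonneg (mul_nonneg h2p _) hmp
                have := hga.le
                nlinarith
              linarith

lemma kk_core (p : ℝ) (hp : 1 ≤ p) {g : ℝ → ℝ≥0∞} (htop : ∀ t, g t ≠ ⊤)
    (hlc : ∀ x y a b : ℝ, 0 ≤ a → 0 ≤ b → a + b = 1 → g x ^ a * g y ^ b ≤ g (a * x + b * y))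
    {m : ℝ} (hm0 : 0 < m)
    (hprob : IsProbabilityMeasure (volume.withDensity g))
    (hm : ∫⁻ t, ENNReal.ofReal |t| ∂(volume.withDensity g) = ENNReal.ofReal m) :
    ∫⁻ t, ENNReal.ofReal (|t| ^ p) ∂(volume.withDensity g) ≤
      ENNReal.ofReal ((15 ^ p + 2 * (2 ^ p * (15 ^ p * 32 + 32 ^ (p+1) * Real.Gamma (p+1)))) * m ^ p) := by
  have hmeas : Measurable g := kk_measurable htop hlc
  have hF : Measurable fun t : ℝ => ENNReal.ofReal (|t| ^ p) :=
    ((Real.continuous_rpow_const (by linarith : (0:ℝ) ≤ p)).comp continuous_abs)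
      |>.measurable.ennreal_ofReal
  set ν := volume.withDensity g with hν
  set T : ℝ := 2 ^ p * (15 ^ p * 32 + 32 ^ (p+1) * Real.Gamma (p+1)) with hT_def
  -- reflected density
  set g' : ℝ → ℝ≥0∞ := fun t => g (-t) with hg'_def
  have htop' : ∀ t, g' t ≠ ⊤ := fun t => htop (-t)
  have hlc' : ∀ x y a b : ℝ, 0 ≤ a → 0 ≤ b → a + b = 1 →
      g' x ^ a * g' y ^ b ≤ g' (a * x + b * y) := by
    intro x y a b ha hb hab
    have h := hlc (-x) (-y) a b ha hb hab
    rw [show a * -x + b * -y = -(a*x+b*y) by ring] at h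
    exact h
  have hmap : volume.withDensity g' = Measure.map Neg.neg ν := kk_withDensity_neg
  have hprob' : IsProbabilityMeasure (volume.withDensity g') := by
    rw [hmap]
    exact Measure.isProbabilityMeasure_map measurable_neg.aemeasurable
  have hm' : ∫⁻ t, ENNReal.ofReal |t| ∂(volume.withDensity g') = ENNReal.ofReal m := by
    rw [hmap, lintegral_map measurable_abs.ennreal_ofReal measurable_neg]
    simpa [abs_neg] using hm
  have hleft : ∫⁻ t in Iio (-(15*m)), ENNReal.ofReal (|t| ^ p) ∂ν ≤
      ENNReal.ofReal (T * m ^ p) := by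
    have h1 := kk_oneside p hp htop' hlc' hm0 hprob' hm'
    rw [hmap, setLIntegral_map measurableSet_Ioi hF measurable_neg] at h1
    have hpre : Neg.neg ⁻¹' (Ioi (15*m)) = Iio (-(15*m)) := by
      ext x; simp [lt_neg]
    rw [hpre] at h1
    simpa [abs_neg, hT_def] using h1
  have hright : ∫⁻ t in Ioi (15*m), ENNReal.ofReal (|t| ^ p) ∂ν ≤
      ENNReal.ofReal (T * m ^ p) := by
    have := kk_oneside p hp htop hlc hm0 hprob hm
    rw [hT_def]
    exact this
  have hmid : ∫⁻ t in Icc (-(15*m)) (15*m), ENNReal.ofReal (|t| ^ p) ∂ν ≤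
      ENNReal.ofReal (15 ^ p * m ^ p) := by
    calc ∫⁻ t in Icc (-(15*m)) (15*m), ENNReal.ofReal (|t| ^ p) ∂ν
        ≤ ∫⁻ _ in Icc (-(15*m)) (15*m), ENNReal.ofReal ((15*m) ^ p) ∂ν := by
          apply setLIntegral_mono' measurableSet_Icc
          intro t ht
          simp only [mem_Icc] at ht
          apply ENNReal.ofReal_le_ofReal
          apply Real.rpow_le_rpow (abs_nonneg t) _ (by linarith)
          rw [abs_le]
          constructor <;> linarith [ht.1, ht.2]
      _ = ENNReal.ofReal ((15*m) ^ p) * ν (Icc (-(15*m)) (15*m)) := setLIntegral_const _ _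
      _ ≤ ENNReal.ofReal ((15*m) ^ p) * 1 := mul_le_mul_right prob_le_one _
      _ = ENNReal.ofReal (15 ^ p * m ^ p) := by
          rw [mul_one, ← Real.mul_rpow (by norm_num) hm0.le]
  have hcover : (univ : Set ℝ) ⊆ Iio (-(15*m)) ∪ (Icc (-(15*m)) (15*m) ∪ Ioi (15*m)) := by
    intro t _
    rcases lt_or_ge t (-(15*m)) with h | h
    · exact Or.inl h
    rcases le_or_gt t (15*m) with h2 | h2
    · exact Or.inr (Or.inl ⟨h, h2⟩)
    · exact Or.inr (Or.inr h2)
  calc ∫⁻ t, ENNReal.ofReal (|t| ^ p) ∂ν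
      = ∫⁻ t in univ, ENNReal.ofReal (|t| ^ p) ∂ν := by rw [Measure.restrict_univ]
    _ ≤ ∫⁻ t in Iio (-(15*m)) ∪ (Icc (-(15*m)) (15*m) ∪ Ioi (15*m)),
          ENNReal.ofReal (|t| ^ p) ∂ν := lintegral_mono_set hcover
    _ ≤ (∫⁻ t in Iio (-(15*m)), ENNReal.ofReal (|t| ^ p) ∂ν)
        + ∫⁻ t in Icc (-(15*m)) (15*m) ∪ Ioi (15*m), ENNReal.ofReal (|t| ^ p) ∂ν :=
        lintegral_union_le _ _ _
    _ ≤ (∫⁻ t in Iio (-(15*m)), ENNReal.ofReal (|t| ^ p) ∂ν)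
        + ((∫⁻ t in Icc (-(15*m)) (15*m), ENNReal.ofReal (|t| ^ p) ∂ν)
          + ∫⁻ t in Ioi (15*m), ENNReal.ofReal (|t| ^ p) ∂ν) :=
        add_le_add_right (lintegral_union_le _ _ _) _
    _ ≤ ENNReal.ofReal (T * m ^ p)
        + (ENNReal.ofReal (15 ^ p * m ^ p) + ENNReal.ofReal (T * m ^ p)) :=
        add_le_add hleft (add_le_add hmid hright)
    _ = ENNReal.ofReal (T * m ^ p + (15 ^ p * m ^ p + T * m ^ p)) := by
        have hga : 0 < Real.Gamma (p+1) := Real.Gamma_pos_of_pos (by linarith)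
        have h2p : (0:ℝ) ≤ 2 ^ p := Real.rpow_nonneg (by norm_num) p
        have h15p : (0:ℝ) ≤ 15 ^ p := Real.rpow_nonneg (by norm_num) p
        have h32p : (0:ℝ) ≤ 32 ^ (p+1) := Real.rpow_nonneg (by norm_num) _
        have hmp : (0:ℝ) ≤ m ^ p := Real.rpow_nonneg hm0.le p
        have hT0 : 0 ≤ T := by
          rw [hT_def]
          apply mul_nonneg h2p
          nlinarith [mul_nonneg h32p hga.le]
        have h1 : 0 ≤ T * m ^ p := mul_nonneg hT0 hmp
        have h2 : 0 ≤ 15 ^ p * m ^ p := mul_nonneg h15p hmp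
        rw [ENNReal.ofReal_add h1 (by linarith : (0:ℝ) ≤ 15 ^ p * m ^ p + T * m ^ p), ENNReal.ofReal_add h2 h1]
    _ = ENNReal.ofReal ((15 ^ p + 2 * T) * m ^ p) := by congr 1; ring

/-- A measure on `ℝ` is log-concave if it is a Dirac mass or absolutely continuous
with respect to Lebesgue measure with log-concave density (i.e. density `e^{-φ}` with
`φ : ℝ → (-∞,∞]` convex). -/
def IsLogConcaveMeasure (ν : Measure ℝ) : Prop :=
  (∃ x : ℝ, ν = Measure.dirac x) ∨
  ∃ g : ℝ → ENNReal, (∀ t, g t ≠ ⊤) ∧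
    (∀ x y a b : ℝ, 0 ≤ a → 0 ≤ b → a + b = 1 →
      g x ^ a * g y ^ b ≤ g (a * x + b * y)) ∧
    ν = volume.withDensity g

/-- Kahane–Khinchin inequality for log-concave probability measures on `ℝ`. -/
theorem stmt0 (p : ℝ) (hp : 1 ≤ p) :
    ∃ C : ℝ, 0 < C ∧ ∀ ν : Measure ℝ, IsProbabilityMeasure ν → IsLogConcaveMeasure ν →
      (∫ t, |t| ^ p ∂ν) ^ (1 / p) ≤ C * ∫ t, |t| ∂ν := by
  have hpne : p ≠ 0 := by linarith
  have hp0 : (0:ℝ) ≤ p := by linarith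
  set K : ℝ := 15 ^ p + 2 * (2 ^ p * (15 ^ p * 32 + 32 ^ (p+1) * Real.Gamma (p+1))) with hK_def
  have hga : 0 < Real.Gamma (p+1) := Real.Gamma_pos_of_pos (by linarith)
  have h2p : (0:ℝ) ≤ 2 ^ p := Real.rpow_nonneg (by norm_num) p
  have h15p : (0:ℝ) ≤ 15 ^ p := Real.rpow_nonneg (by norm_num) p
  have h32p : (0:ℝ) ≤ 32 ^ (p+1) := Real.rpow_nonneg (by norm_num) _
  have hK0 : 0 ≤ K := by
    rw [hK_def]
    have := mul_nonneg h32p hga.le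
    nlinarith [mul_nonneg h2p (by nlinarith : (0:ℝ) ≤ 15 ^ p * 32 + 32 ^ (p+1) * Real.Gamma (p+1))]
  refine ⟨max 1 (K ^ (1/p)), lt_of_lt_of_le one_pos (le_max_left _ _), ?_⟩
  intro ν hprob hlog
  have hC1 : (1:ℝ) ≤ max 1 (K ^ (1/p)) := le_max_left _ _
  rcases hlog with ⟨x, rfl⟩ | ⟨g, htop, hlc, rfl⟩
  · -- Dirac case
    rw [integral_dirac, integral_dirac, ← Real.rpow_mul (abs_nonneg x),
      mul_one_div_cancel hpne, Real.rpow_one]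
    nlinarith [abs_nonneg x, hC1]
  · -- absolutely continuous case
    haveI := hprob
    have hmeasp : AEStronglyMeasurable (fun t : ℝ => |t| ^ p) (volume.withDensity g) :=
      ((Real.continuous_rpow_const hp0).comp continuous_abs).aestronglyMeasurable
    have hmeas1 : AEStronglyMeasurable (fun t : ℝ => |t|) (volume.withDensity g) :=
      continuous_abs.aestronglyMeasurable
    have hInt1 : ∫ t, |t| ∂(volume.withDensity g)
        = (∫⁻ t, ENNReal.ofReal |t| ∂(volume.withDensity g)).toReal :=
      integral_eq_lintegral_of_nonneg_ae (ae_of_all _ fun t => abs_nonneg t) hmeas1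
    have hIntp : ∫ t, |t| ^ p ∂(volume.withDensity g)
        = (∫⁻ t, ENNReal.ofReal (|t| ^ p) ∂(volume.withDensity g)).toReal :=
      integral_eq_lintegral_of_nonneg_ae
        (ae_of_all _ fun t => Real.rpow_nonneg (abs_nonneg t) p) hmeasp
    by_cases htop1 : (∫⁻ t, ENNReal.ofReal |t| ∂(volume.withDensity g)) = ⊤
    · -- infinite first moment
      have hip : (∫⁻ t, ENNReal.ofReal (|t| ^ p) ∂(volume.withDensity g)) = ⊤ := by
        by_contra hfin
        have hpoint : ∀ t : ℝ, ENNReal.ofReal |t| ≤ ENNReal.ofReal (|t| ^ p) + 1 := by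
          intro t
          have h1 : |t| ≤ |t| ^ p + 1 := by
            rcases le_total (|t|) 1 with h | h
            · have : (0:ℝ) ≤ |t| ^ p := Real.rpow_nonneg (abs_nonneg t) p
              linarith
            · have : |t| ^ (1:ℝ) ≤ |t| ^ p := Real.rpow_le_rpow_of_exponent_le h hp
              rw [Real.rpow_one] at this
              linarith
          calc ENNReal.ofReal |t| ≤ ENNReal.ofReal (|t| ^ p + 1) := ENNReal.ofReal_le_ofReal h1
            _ = ENNReal.ofReal (|t| ^ p) + ENNReal.ofReal 1 :=
                ENNReal.ofReal_add (Real.rpow_nonneg (abs_nonneg t) p) one_pos.le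
            _ = ENNReal.ofReal (|t| ^ p) + 1 := by rw [ENNReal.ofReal_one]
        have hle : (∫⁻ t, ENNReal.ofReal |t| ∂(volume.withDensity g))
            ≤ (∫⁻ t, ENNReal.ofReal (|t| ^ p) ∂(volume.withDensity g)) + 1 := by
          calc (∫⁻ t, ENNReal.ofReal |t| ∂(volume.withDensity g))
              ≤ ∫⁻ t, ENNReal.ofReal (|t| ^ p) + 1 ∂(volume.withDensity g) :=
                lintegral_mono hpoint
            _ = (∫⁻ t, ENNReal.ofReal (|t| ^ p) ∂(volume.withDensity g)) + 1 := by
                rw [lintegral_add_right _ measurable_const, lintegral_const, measure_univ, mul_one]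
        rw [htop1] at hle
        have : (∫⁻ t, ENNReal.ofReal (|t| ^ p) ∂(volume.withDensity g)) + 1 = ⊤ :=
          top_le_iff.mp hle
        rw [ENNReal.add_eq_top] at this
        rcases this with h | h
        · exact hfin h
        · exact ENNReal.one_ne_top h
      rw [hIntp, hip]
      rw [ENNReal.toReal_top, Real.zero_rpow (one_div_ne_zero hpne)]
      apply mul_nonneg (by linarith) (integral_nonneg fun t => abs_nonneg t)
    · -- finite first moment
      set m := (∫⁻ t, ENNReal.ofReal |t| ∂(volume.withDensity g)).toReal with hm_def
      have hm : (∫⁻ t, ENNReal.ofReal |t| ∂(volume.withDensity g)) = ENNReal.ofReal m :=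
        (ENNReal.ofReal_toReal htop1).symm
      have hm0 : 0 < m := by
        rcases lt_or_eq_of_le (ENNReal.toReal_nonneg : 0 ≤ m) with h | h
        · exact h
        exfalso
        have hJ0 : (∫⁻ t, ENNReal.ofReal |t| ∂(volume.withDensity g)) = 0 := by
          rw [hm, hm_def, ← h, ENNReal.ofReal_zero]
        rw [lintegral_eq_zero_iff measurable_abs.ennreal_ofReal] at hJ0
        have hae : ∀ᵐ t ∂(volume.withDensity g), t ∈ ({0} : Set ℝ) := by
          filter_upwards [hJ0] with t ht
          simp only [Pi.zero_apply, ENNReal.ofReal_eq_zero] at ht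
          simp [abs_nonpos_iff.mp ht]
        have hcompl : (volume.withDensity g) ({(0:ℝ)}ᶜ) = 0 := by
          have h2 := hae
          rw [ae_iff] at h2
          exact h2
        have h0 : (volume.withDensity g) {(0:ℝ)} = 0 := by
          rw [withDensity_apply _ (measurableSet_singleton 0)]
          apply setLIntegral_measure_zero
          exact Real.volume_singleton
        have hcontra : (1:ℝ≥0∞) ≤ 0 := by
          calc (1:ℝ≥0∞) = (volume.withDensity g) univ := measure_univ.symm
            _ = (volume.withDensity g) ({(0:ℝ)} ∪ {(0:ℝ)}ᶜ) := by rw [union_compl_self]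
            _ ≤ (volume.withDensity g) {(0:ℝ)} + (volume.withDensity g) ({(0:ℝ)}ᶜ) :=
                measure_union_le _ _
            _ = 0 := by rw [h0, hcompl, add_zero]
        simp at hcontra
      have hcore := kk_core p hp htop hlc hm0 hprob hm
      have hmp : (0:ℝ) ≤ m ^ p := Real.rpow_nonneg hm0.le p
      have hJp : (∫⁻ t, ENNReal.ofReal (|t| ^ p) ∂(volume.withDensity g)).toReal ≤ K * m ^ p :=
        ENNReal.toReal_le_of_le_ofReal (mul_nonneg hK0 hmp) hcore
      rw [hIntp, hInt1]
      calc ((∫⁻ t, ENNReal.ofReal (|t| ^ p) ∂(volume.withDensity g)).toReal) ^ (1/p)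
          ≤ (K * m ^ p) ^ (1/p) :=
            Real.rpow_le_rpow ENNReal.toReal_nonneg hJp (by positivity)
        _ = K ^ (1/p) * m := by
            rw [Real.mul_rpow hK0 hmp, ← Real.rpow_mul hm0.le, mul_one_div_cancel hpne,
              Real.rpow_one]
        _ ≤ max 1 (K ^ (1/p)) * m := mul_le_mul_of_nonneg_right (le_max_right _ _) hm0.le
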